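/- arXiv:2409.11268 — 3 statements merged into one kernel-verified Lean document; each statement's English description precedes it below -/
import Mathlib

section
/- For all n ≥ 0, a_n = Σ_{i ≥ 0} C(n-2i, 2)·|B(i)|, where the sum is over all integers i with 0 ≤ i ≤ ⌊n/2⌋ and C(m,2) = m(m-1)/2 for m ≥ 0 (and 0 for m < 2). -/
/-- `pre2 s` is the multiset of all pairwise products of two distinct entries
(by position) of the multiset `s`, i.e. the summands of `e₂` evaluated at `s`. -/
def pre2 (s : Multiset ℕ) : Multiset ℕ := (Multiset.powersetCard 2 s).map Multiset.prod

open Classical in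
/-- The finset of binary partitions of `n`: partitions all of whose parts are powers of 2. -/
noncomputable def binaryPartitions (n : ℕ) : Finset (Nat.Partition n) :=
  Finset.univ.filter fun l => ∀ p ∈ l.parts, ∃ i : ℕ, p = 2 ^ i

/-- `a n = m₁(ImB₂(n))`: the total number of parts equal to 1 in the image of `pre2`
on binary partitions of `n` with at least two parts; by injectivity this equals
`∑_{λ ∈ B(n)} C(m₁(λ), 2)`. -/
noncomputable def a (n : ℕ) : ℕ :=
  ∑ l ∈ binaryPartitions n, Nat.choose (l.parts.count 1) 2

lemma mem_binaryPartitions {n : ℕ} {l : Nat.Partition n} :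
    l ∈ binaryPartitions n ↔ ∀ p ∈ l.parts, ∃ i : ℕ, p = 2 ^ i := by
  classical
  simp [binaryPartitions]

lemma sum_map_two_mul (s : Multiset ℕ) : (s.map (2 * ·)).sum = 2 * s.sum := by
  induction s using Multiset.induction with
  | empty => simp
  | cons a s ih => simp [ih, mul_add]

lemma even_sum_multiset (s : Multiset ℕ) (h : ∀ x ∈ s, Even x) : Even s.sum := by
  induction s using Multiset.induction with
  | empty => simp
  | cons a s ih =>
    rw [Multiset.sum_cons]
    exact (h a (Multiset.mem_cons_self a s)).add
      (ih fun x hx => h x (Multiset.mem_cons_of_mem hx))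

lemma parts_decomp {n : ℕ} (l : Nat.Partition n) :
    l.parts = Multiset.replicate (l.parts.count 1) 1 + l.parts.filter (· ≠ 1) := by
  classical
  conv_lhs => rw [← Multiset.filter_add_not (· = 1) l.parts]
  rw [Multiset.filter_eq']

lemma filter_even {n : ℕ} {l : Nat.Partition n} (hl : l ∈ binaryPartitions n) :
    ∀ x ∈ l.parts.filter (· ≠ 1), Even x := by
  intro x hx
  rw [Multiset.mem_filter] at hx
  obtain ⟨k, rfl⟩ := mem_binaryPartitions.mp hl x hx.1
  have hk : k ≠ 0 := by rintro rfl; exact hx.2 rfl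
  obtain ⟨m, rfl⟩ : ∃ m, k = m + 1 := ⟨k - 1, by omega⟩
  exact ⟨2 ^ m, by rw [pow_succ]; omega⟩

lemma sum_filter_eq {n : ℕ} (l : Nat.Partition n) :
    l.parts.count 1 + (l.parts.filter (· ≠ 1)).sum = n := by
  classical
  conv_rhs => rw [← l.parts_sum, parts_decomp l]
  rw [Multiset.sum_add, Multiset.sum_replicate, smul_eq_mul, mul_one]

/-- Expansion map: from a binary partition of `i` to a partition of `n`
with `n - 2i` ones and doubled parts. -/
def expandP (n i : ℕ) (h : 2 * i ≤ n) (μ : Nat.Partition i) : Nat.Partition n where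
  parts := Multiset.replicate (n - 2 * i) 1 + μ.parts.map (2 * ·)
  parts_pos := by
    intro p hp
    rcases Multiset.mem_add.mp hp with h1 | h2
    · rw [Multiset.eq_of_mem_replicate h1]; norm_num
    · obtain ⟨x, hx, rfl⟩ := Multiset.mem_map.mp h2
      have := μ.parts_pos hx; omega
  parts_sum := by
    rw [Multiset.sum_add, Multiset.sum_replicate, sum_map_two_mul, μ.parts_sum,
      smul_eq_mul, mul_one]
    omega

theorem stmt_3 (n : ℕ) :
    a n = ∑ i ∈ Finset.range (n / 2 + 1),
      Nat.choose (n - 2 * i) 2 * (binaryPartitions i).card := by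
  classical
  have hmaps : ∀ l ∈ binaryPartitions n,
      (n - l.parts.count 1) / 2 ∈ Finset.range (n / 2 + 1) := by
    intro l hl
    rw [Finset.mem_range]
    have := Nat.div_le_div_right (c := 2) (Nat.sub_le n (l.parts.count 1))
    omega
  rw [a, ← Finset.sum_fiberwise_of_maps_to hmaps]
  refine Finset.sum_congr rfl fun i hi => ?_
  rw [Finset.mem_range] at hi
  have h2i : 2 * i ≤ n := by
    have := Nat.div_mul_le_self n 2; omega
  -- key characterization of fiber membership
  have hfib : ∀ l ∈ binaryPartitions n,
      ((n - l.parts.count 1) / 2 = i ↔ l.parts.count 1 = n - 2 * i) := by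
    intro l hl
    have hsum := sum_filter_eq l
    have heven : Even (n - l.parts.count 1) := by
      have := even_sum_multiset _ (filter_even hl)
      have : n - l.parts.count 1 = (l.parts.filter (· ≠ 1)).sum := by omega
      rw [this]
      exact even_sum_multiset _ (filter_even hl)
    obtain ⟨m, hm⟩ := heven
    constructor
    · intro h; omega
    · intro h; omega
  have hconst : ∀ l ∈ (binaryPartitions n).filter
      (fun l => (n - l.parts.count 1) / 2 = i), l.parts.count 1 = n - 2 * i := by
    intro l hl
    rw [Finset.mem_filter] at hl
    exact (hfib l hl.1).mp hl.2
  rw [Finset.sum_congr rfl (fun l hl => by rw [hconst l hl]), Finset.sum_const,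
    smul_eq_mul, mul_comm]
  congr 1
  -- card of fiber = card (binaryPartitions i), via bijection expandP
  refine (Finset.card_bij (fun μ _ => expandP n i h2i μ) ?_ ?_ ?_).symm
  · -- maps into fiber
    intro μ hμ
    rw [Finset.mem_filter]
    have hcount : (expandP n i h2i μ).parts.count 1 = n - 2 * i := by
      rw [expandP, Multiset.count_add, Multiset.count_replicate, if_pos rfl]
      have : (1 : ℕ) ∉ μ.parts.map (2 * ·) := by
        intro h
        obtain ⟨x, hx, hx1⟩ := Multiset.mem_map.mp h
        have h1 := μ.parts_pos hx
        have h2 : 2 * x = 1 := hx1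
        omega
      rw [Multiset.count_eq_zero.mpr this]
      omega
    constructor
    · rw [mem_binaryPartitions]
      intro p hp
      rcases Multiset.mem_add.mp hp with h1 | h2
      · exact ⟨0, by rw [Multiset.eq_of_mem_replicate h1]; rfl⟩
      · obtain ⟨x, hx, rfl⟩ := Multiset.mem_map.mp h2
        obtain ⟨k, rfl⟩ := mem_binaryPartitions.mp hμ x hx
        exact ⟨k + 1, by rw [pow_succ']⟩
    · rw [hcount]; omega
  · -- injective
    intro μ₁ h₁ μ₂ h₂ h
    have : μ₁.parts.map (2 * ·) = μ₂.parts.map (2 * ·) := by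
      have := congrArg Nat.Partition.parts h
      simp only [expandP] at this
      exact add_left_cancel this
    have := Multiset.map_injective (f := (2 * · : ℕ → ℕ))
      (fun a b hab => by have h : 2 * a = 2 * b := hab; omega) this
    exact Nat.Partition.ext this
  · -- surjective
    intro l hl
    rw [Finset.mem_filter] at hl
    obtain ⟨hlb, hlf⟩ := hl
    have hc : l.parts.count 1 = n - 2 * i := (hfib l hlb).mp hlf
    set t := l.parts.filter (· ≠ 1) with ht
    have htsum : t.sum = 2 * i := by
      have hs := sum_filter_eq l
      rw [← ht] at hs
      omega
    have hkey : t.map (fun x => 2 * (x / 2)) = t := by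
      refine (Multiset.map_congr rfl fun x hx => ?_).trans (Multiset.map_id t)
      exact Nat.mul_div_cancel' ((filter_even hlb x hx).two_dvd)
    refine ⟨⟨t.map (· / 2), ?_, ?_⟩, ?_, ?_⟩
    · intro p hp
      obtain ⟨x, hx, rfl⟩ := Multiset.mem_map.mp hp
      have hpos := l.parts_pos (Multiset.mem_of_mem_filter hx)
      have hev := (filter_even hlb x hx).two_dvd
      omega
    · have : (t.map (· / 2)).map (2 * ·) = t := by
        rw [Multiset.map_map]; exact hkey
      have h2 : 2 * (t.map (· / 2)).sum = 2 * i := by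
        rw [← sum_map_two_mul, this, htsum]
      omega
    · rw [mem_binaryPartitions]
      intro p hp
      obtain ⟨x, hx, rfl⟩ := Multiset.mem_map.mp hp
      obtain ⟨k, rfl⟩ := mem_binaryPartitions.mp hlb x (Multiset.mem_of_mem_filter hx)
      have hk : k ≠ 0 := by
        rintro rfl
        exact (Multiset.mem_filter.mp hx).2 rfl
      exact ⟨k - 1, by rw [← Nat.pow_div (by omega) (by norm_num), pow_one]⟩
    · refine Nat.Partition.ext ?_
      show Multiset.replicate (n - 2 * i) 1 + (t.map (· / 2)).map (2 * ·) = l.parts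
      rw [Multiset.map_map]
      show Multiset.replicate (n - 2 * i) 1 + t.map (fun x => 2 * (x / 2)) = l.parts
      rw [hkey, ← hc, ← parts_decomp]
end

section
/- For all n ≥ 0, as an identity of integers, (n-3)·b_n = Σ_{k=1}^{n} (β(k) + (-1)^k + 2)·b_{n-k}, where β(k) = Σ_{2^i | k} 2^i is the sum of the divisors of k that are powers of 2. -/
/-- `b n = m₂(ImB₂(n))`: the total number of parts equal to 2 in the image of `pre2`
on binary partitions of `n` with at least two parts; by injectivity this equals
`∑_{λ ∈ B(n)} m₁(λ)·m₂(λ)`. -/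
noncomputable def b (n : ℕ) : ℕ :=
  ∑ l ∈ binaryPartitions n, (l.parts.count 1) * (l.parts.count 2)

open Classical in
/-- `beta k` is the sum of the divisors of `k` that are powers of 2. -/
noncomputable def beta (k : ℕ) : ℕ :=
  ∑ d ∈ (Nat.divisors k).filter (fun d => ∃ i : ℕ, d = 2 ^ i), d

/-! ### Auxiliary definitions and lemmas -/

/-- Binary partitions of `n`, as a finset of multisets. -/
noncomputable def BP (n : ℕ) : Finset (Multiset ℕ) :=
  (binaryPartitions n).image Nat.Partition.parts

lemma mem_BP {n : ℕ} {s : Multiset ℕ} :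
    s ∈ BP n ↔ s.sum = n ∧ ∀ p ∈ s, ∃ i : ℕ, p = 2 ^ i := by
  classical
  constructor
  · intro hs
    simp only [BP, Finset.mem_image] at hs
    obtain ⟨l, hl, rfl⟩ := hs
    simp only [binaryPartitions, Finset.mem_filter] at hl
    exact ⟨l.parts_sum, hl.2⟩
  · rintro ⟨h1, h2⟩
    refine Finset.mem_image.2 ⟨⟨s, ?_, h1⟩, ?_, rfl⟩
    · intro p hp; obtain ⟨i, rfl⟩ := h2 p hp; positivity
    · simp only [binaryPartitions, Finset.mem_filter, Finset.mem_univ, true_and]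
      exact h2

/-- The weight function `m₁ · m₂`. -/
def fI (s : Multiset ℕ) : ℤ := (s.count 1 : ℤ) * s.count 2

lemma b_eq (n : ℕ) : (b n : ℤ) = ∑ s ∈ BP n, fI s := by
  classical
  rw [b, BP, Finset.sum_image (fun x _ y _ h => Nat.Partition.ext h)]
  push_cast
  rfl

/-- Master bijection lemma: summing a function of "remove `j` copies of `t`" over all
binary partitions of `n` equals summing over `k` divisible by `t` and partitions of `n - k`. -/
lemma master (n t : ℕ) (ht : ∃ i : ℕ, t = 2 ^ i) (f : Multiset ℕ → ℤ) :
    ∑ s ∈ BP n, ∑ j ∈ Finset.Icc 1 (s.count t), f (s - Multiset.replicate j t)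
      = ∑ k ∈ (Finset.Icc 1 n).filter (t ∣ ·), ∑ μ ∈ BP (n - k), f μ := by
  classical
  have htpos : 0 < t := by obtain ⟨i, rfl⟩ := ht; positivity
  rw [Finset.sum_sigma' (BP n) _ (fun s j => f (s - Multiset.replicate j t)),
      Finset.sum_sigma' _ _ (fun k μ => f μ)]
  refine Finset.sum_nbij' (fun p => ⟨p.2 * t, p.1 - Multiset.replicate p.2 t⟩)
    (fun q => ⟨q.2 + Multiset.replicate (q.1 / t) t, q.1 / t⟩) ?_ ?_ ?_ ?_ ?_
  · rintro ⟨s, j⟩ hp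
    simp only [Finset.mem_sigma, Finset.mem_Icc] at hp
    obtain ⟨hs, hj1, hj2⟩ := hp
    obtain ⟨hsum, hpow⟩ := mem_BP.1 hs
    have hrep : Multiset.replicate j t ≤ s := Multiset.le_count_iff_replicate_le.1 hj2
    have h2 : (s - Multiset.replicate j t) + Multiset.replicate j t = s :=
      tsub_add_cancel_of_le hrep
    have h3 : (s - Multiset.replicate j t).sum + j * t = n := by
      have := congrArg Multiset.sum h2
      simpa [Multiset.sum_add, Multiset.sum_replicate, smul_eq_mul, hsum] using this
    have hsum' : j * t ≤ n := by omega
    simp only [Finset.mem_sigma, Finset.mem_filter, Finset.mem_Icc]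
    refine ⟨⟨⟨?_, hsum'⟩, dvd_mul_left t j⟩, ?_⟩
    · exact Nat.one_le_iff_ne_zero.2 (by positivity)
    · rw [mem_BP]
      constructor
      · omega
      · intro p hp
        exact hpow p (Multiset.mem_of_le (tsub_le_self) hp)
  · rintro ⟨k, μ⟩ hq
    simp only [Finset.mem_sigma, Finset.mem_filter, Finset.mem_Icc] at hq
    obtain ⟨⟨⟨hk1, hk2⟩, hdvd⟩, hμ⟩ := hq
    obtain ⟨hsum, hpow⟩ := mem_BP.1 hμ
    have hjt : k / t * t = k := Nat.div_mul_cancel hdvd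
    have hj1 : 1 ≤ k / t := (Nat.one_le_div_iff htpos).2 (Nat.le_of_dvd (by omega) hdvd)
    simp only [Finset.mem_sigma, Finset.mem_Icc]
    constructor
    · rw [mem_BP]
      constructor
      · simp only [Multiset.sum_add, Multiset.sum_replicate, smul_eq_mul, hsum, hjt]
        omega
      · intro p hp
        rcases Multiset.mem_add.1 hp with h | h
        · exact hpow p h
        · rw [Multiset.eq_of_mem_replicate h]; exact ht
    · refine ⟨hj1, ?_⟩
      rw [Multiset.count_add, Multiset.count_replicate_self]
      omega
  · rintro ⟨s, j⟩ hp
    simp only [Finset.mem_sigma, Finset.mem_Icc] at hp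
    obtain ⟨hs, hj1, hj2⟩ := hp
    have hrep : Multiset.replicate j t ≤ s := Multiset.le_count_iff_replicate_le.1 hj2
    have hd : j * t / t = j := Nat.mul_div_cancel j htpos
    refine Sigma.ext ?_ (heq_of_eq ?_)
    · simp only [hd]; exact tsub_add_cancel_of_le hrep
    · simp only [hd]
  · rintro ⟨k, μ⟩ hq
    simp only [Finset.mem_sigma, Finset.mem_filter, Finset.mem_Icc] at hq
    obtain ⟨⟨⟨hk1, hk2⟩, hdvd⟩, hμ⟩ := hq
    have hjt : k / t * t = k := Nat.div_mul_cancel hdvd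
    have e1 : μ + Multiset.replicate (k / t) t - Multiset.replicate (k / t) t = μ :=
      add_tsub_cancel_right μ _
    refine Sigma.ext ?_ (heq_of_eq ?_)
    · exact hjt
    · exact e1
  · rintro ⟨s, j⟩ _
    rfl

/-- `Sg m = ∑_{j=1}^m (m - j)`. -/
def Sg (m : ℕ) : ℕ := ∑ j ∈ Finset.Icc 1 m, (m - j)

lemma Sg_eq (m : ℕ) : Sg m = ∑ i ∈ Finset.range m, i := by
  refine Finset.sum_nbij' (fun j => m - j) (fun i => m - i) ?_ ?_ ?_ ?_ ?_ <;>
    intro a ha <;>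
    simp only [Finset.mem_Icc, Finset.mem_range] at * <;> omega

lemma two_Sg (m : ℕ) : 2 * (Sg m : ℤ) = (m : ℤ) ^ 2 - m := by
  rw [Sg_eq]
  induction m with
  | zero => simp
  | succ k ih =>
    rw [Finset.sum_range_succ]
    push_cast
    push_cast at ih
    ring_nf
    ring_nf at ih
    linarith

lemma beta_eq {k n : ℕ} (hk : k ∈ Finset.Icc 1 n) :
    (beta k : ℤ) = ∑ i ∈ Finset.range (n + 1), if 2 ^ i ∣ k then (2 ^ i : ℤ) else 0 := by
  classical
  simp only [Finset.mem_Icc] at hk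
  rw [← Finset.sum_filter]
  have himg : (Nat.divisors k).filter (fun d => ∃ i : ℕ, d = 2 ^ i) =
      Finset.image (fun i => 2 ^ i) ((Finset.range (n + 1)).filter (fun i => 2 ^ i ∣ k)) := by
    ext d
    simp only [Finset.mem_filter, Nat.mem_divisors, Finset.mem_image, Finset.mem_range]
    constructor
    · rintro ⟨⟨hdvd, hk0⟩, i, rfl⟩
      refine ⟨i, ⟨?_, hdvd⟩, rfl⟩
      have h1 : 2 ^ i ≤ k := Nat.le_of_dvd (by omega) hdvd
      have h2 : i < 2 ^ i := (Nat.lt_two_pow_self (n := i))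
      omega
    · rintro ⟨i, ⟨hi, hdvd⟩, rfl⟩
      exact ⟨⟨hdvd, by omega⟩, i, rfl⟩
  rw [beta, himg, Finset.sum_image (fun x _ y _ h =>
    Nat.pow_right_injective le_rfl h)]
  push_cast
  rfl

lemma multiset_sum_eq (s : Multiset ℕ) : s.sum = ∑ a ∈ s.toFinset, s.count a * a := by
  have h := congrArg Multiset.sum (Multiset.toFinset_sum_count_nsmul_eq s)
  rw [← h]
  show Multiset.sumAddMonoidHom (∑ a ∈ s.toFinset, Multiset.count a s • ({a} : Multiset ℕ))
      = ∑ a ∈ s.toFinset, Multiset.count a s * a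
  rw [map_sum Multiset.sumAddMonoidHom _ s.toFinset]
  refine Finset.sum_congr rfl (fun a _ => ?_)
  show (Multiset.count a s • ({a} : Multiset ℕ)).sum = Multiset.count a s * a
  rw [Multiset.nsmul_singleton, Multiset.sum_replicate, smul_eq_mul]

lemma sum_counts {n : ℕ} {s : Multiset ℕ} (hsum : s.sum = n)
    (hpow : ∀ p ∈ s, ∃ i : ℕ, p = 2 ^ i) :
    n = ∑ i ∈ Finset.range (n + 1), 2 ^ i * s.count (2 ^ i) := by
  classical
  have h1 : s.toFinset ⊆ Finset.image (fun i => 2 ^ i) (Finset.range (n + 1)) := by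
    intro a ha
    rw [Multiset.mem_toFinset] at ha
    obtain ⟨i, rfl⟩ := hpow a ha
    have hle : 2 ^ i ≤ n := hsum ▸ Multiset.single_le_sum (fun x _ => Nat.zero_le x) _ ha
    have h2 : i < 2 ^ i := (Nat.lt_two_pow_self (n := i))
    exact Finset.mem_image.2 ⟨i, Finset.mem_range.2 (by omega), rfl⟩
  calc n = ∑ a ∈ s.toFinset, s.count a * a := hsum ▸ multiset_sum_eq s
    _ = ∑ a ∈ Finset.image (fun i => 2 ^ i) (Finset.range (n + 1)), s.count a * a := by
        refine Finset.sum_subset h1 (fun x _ hx => ?_)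
        rw [Multiset.mem_toFinset] at hx
        simp [Multiset.count_eq_zero_of_notMem hx]
    _ = ∑ i ∈ Finset.range (n + 1), 2 ^ i * s.count (2 ^ i) := by
        rw [Finset.sum_image (fun x _ y _ h => Nat.pow_right_injective le_rfl h)]
        simp [mul_comm]

lemma inner0 (s : Multiset ℕ) :
    ∑ j ∈ Finset.Icc 1 (s.count 1), fI (s - Multiset.replicate j 1)
      = (Sg (s.count 1) : ℤ) * (s.count 2) := by
  classical
  have h : ∀ j ∈ Finset.Icc 1 (s.count 1),
      fI (s - Multiset.replicate j 1) = ((s.count 1 - j : ℕ) : ℤ) * (s.count 2) := by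
    intro j hj
    unfold fI
    rw [Multiset.count_sub, Multiset.count_sub]
    simp [Multiset.count_replicate]
  rw [Finset.sum_congr rfl h, Sg, Nat.cast_sum, Finset.sum_mul]

lemma inner1 (s : Multiset ℕ) :
    ∑ j ∈ Finset.Icc 1 (s.count 2), fI (s - Multiset.replicate j 2)
      = (s.count 1 : ℤ) * (Sg (s.count 2) : ℤ) := by
  classical
  have h : ∀ j ∈ Finset.Icc 1 (s.count 2),
      fI (s - Multiset.replicate j 2) = (s.count 1 : ℤ) * ((s.count 2 - j : ℕ) : ℤ) := by
    intro j hj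
    unfold fI
    rw [Multiset.count_sub, Multiset.count_sub]
    simp [Multiset.count_replicate]
  rw [Finset.sum_congr rfl h, Sg, Nat.cast_sum, Finset.mul_sum]

lemma innerBig (s : Multiset ℕ) (i : ℕ) (hi : 2 ≤ i) :
    ∑ j ∈ Finset.Icc 1 (s.count (2 ^ i)), fI (s - Multiset.replicate j (2 ^ i))
      = (s.count (2 ^ i) : ℤ) * ((s.count 1 : ℤ) * (s.count 2 : ℤ)) := by
  classical
  have h4 : 4 ≤ 2 ^ i := by
    calc (4 : ℕ) = 2 ^ 2 := by norm_num
    _ ≤ 2 ^ i := Nat.pow_le_pow_right (by norm_num) hi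
  have h : ∀ j ∈ Finset.Icc 1 (s.count (2 ^ i)),
      fI (s - Multiset.replicate j (2 ^ i)) = (s.count 1 : ℤ) * (s.count 2 : ℤ) := by
    intro j hj
    unfold fI
    rw [Multiset.count_sub, Multiset.count_sub]
    rw [Multiset.count_replicate, Multiset.count_replicate]
    rw [if_neg (by omega), if_neg (by omega)]
    simp
  rw [Finset.sum_congr rfl h, Finset.sum_const, Nat.card_Icc]
  simp [mul_comm]

theorem stmt_9 (n : ℕ) :
    ((n : ℤ) - 3) * (b n : ℤ) =
      ∑ k ∈ Finset.Icc 1 n, ((beta k : ℤ) + (-1) ^ k + 2) * (b (n - k) : ℤ) := by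
  classical
  rcases Nat.eq_zero_or_pos n with rfl | hn1
  · have hb0 : (b 0 : ℤ) = 0 := by
      rw [b_eq]
      refine Finset.sum_eq_zero (fun s hs => ?_)
      obtain ⟨hsum, _⟩ := mem_BP.1 hs
      have h1 : (1 : ℕ) ∉ s := fun h =>
        by have := Multiset.single_le_sum (fun x _ => Nat.zero_le x) _ h; omega
      simp [fI, Multiset.count_eq_zero_of_notMem h1]
    simp [hb0]
  -- Step 1: expand the coefficient.
  have hstep : ∀ k ∈ Finset.Icc 1 n, ((beta k : ℤ) + (-1) ^ k + 2) * (b (n - k) : ℤ)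
      = (∑ i ∈ Finset.range (n + 1),
            if 2 ^ i ∣ k then (2 : ℤ) ^ i * (b (n - k) : ℤ) else 0)
        + (b (n - k) : ℤ)
        + (if 2 ∣ k then (2 : ℤ) * (b (n - k) : ℤ) else 0) := by
    intro k hk
    rw [beta_eq hk, add_mul, add_mul, Finset.sum_mul]
    have h2 : ∀ i ∈ Finset.range (n + 1),
        (if 2 ^ i ∣ k then (2 ^ i : ℤ) else 0) * (b (n - k) : ℤ)
          = if 2 ^ i ∣ k then (2 : ℤ) ^ i * (b (n - k) : ℤ) else 0 := by
      intro i _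
      split <;> simp
    rw [Finset.sum_congr rfl h2]
    rcases Nat.even_or_odd k with he | ho
    · obtain ⟨r, hr⟩ := he
      have hdvd : 2 ∣ k := ⟨r, by omega⟩
      rw [Even.neg_one_pow ⟨r, hr⟩, if_pos hdvd]
      ring
    · obtain ⟨r, hr⟩ := ho
      have hdvd : ¬ (2 ∣ k) := by omega
      rw [Odd.neg_one_pow ⟨r, hr⟩, if_neg hdvd]
      ring
  rw [Finset.sum_congr rfl hstep, Finset.sum_add_distrib, Finset.sum_add_distrib]
  -- Step 2: convert each piece to filtered sums and apply the master lemma.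
  have hT : ∀ i : ℕ, ∑ k ∈ (Finset.Icc 1 n).filter (2 ^ i ∣ ·), (b (n - k) : ℤ)
      = ∑ s ∈ BP n, ∑ j ∈ Finset.Icc 1 (s.count (2 ^ i)),
          fI (s - Multiset.replicate j (2 ^ i)) := by
    intro i
    rw [Finset.sum_congr rfl (fun k _ => b_eq (n - k))]
    exact (master n (2 ^ i) ⟨i, rfl⟩ fI).symm
  have hA : ∑ k ∈ Finset.Icc 1 n, (∑ i ∈ Finset.range (n + 1),
        if 2 ^ i ∣ k then (2 : ℤ) ^ i * (b (n - k) : ℤ) else 0)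
      = ∑ i ∈ Finset.range (n + 1), (2 : ℤ) ^ i *
          ∑ s ∈ BP n, ∑ j ∈ Finset.Icc 1 (s.count (2 ^ i)),
            fI (s - Multiset.replicate j (2 ^ i)) := by
    rw [Finset.sum_comm]
    refine Finset.sum_congr rfl (fun i _ => ?_)
    rw [← Finset.sum_filter, ← Finset.mul_sum, hT i]
  have hB : ∑ k ∈ Finset.Icc 1 n, (b (n - k) : ℤ)
      = ∑ s ∈ BP n, ∑ j ∈ Finset.Icc 1 (s.count 1),
          fI (s - Multiset.replicate j 1) := by
    have : Finset.Icc 1 n = (Finset.Icc 1 n).filter ((2 : ℕ) ^ 0 ∣ ·) :=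
      (Finset.filter_true_of_mem (fun x _ => by simp)).symm
    rw [this, hT 0]
    norm_num
  have hC : ∑ k ∈ Finset.Icc 1 n, (if 2 ∣ k then (2 : ℤ) * (b (n - k) : ℤ) else 0)
      = 2 * ∑ s ∈ BP n, ∑ j ∈ Finset.Icc 1 (s.count 2),
          fI (s - Multiset.replicate j 2) := by
    rw [← Finset.sum_filter, ← Finset.mul_sum]
    have h2 : ((Finset.Icc 1 n).filter (2 ∣ ·)) = ((Finset.Icc 1 n).filter ((2:ℕ) ^ 1 ∣ ·)) := by
      norm_num
    rw [h2, hT 1]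
    norm_num
  rw [hA, hB, hC]
  -- Step 3: bring everything to a single sum over s ∈ BP n.
  have hswap : ∑ i ∈ Finset.range (n + 1), (2 : ℤ) ^ i *
        ∑ s ∈ BP n, ∑ j ∈ Finset.Icc 1 (s.count (2 ^ i)),
          fI (s - Multiset.replicate j (2 ^ i))
      = ∑ s ∈ BP n, ∑ i ∈ Finset.range (n + 1), (2 : ℤ) ^ i *
          ∑ j ∈ Finset.Icc 1 (s.count (2 ^ i)), fI (s - Multiset.replicate j (2 ^ i)) := by
    rw [Finset.sum_congr rfl (fun i (_ : i ∈ Finset.range (n+1)) => Finset.mul_sum (BP n)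
      (fun s => ∑ j ∈ Finset.Icc 1 (s.count (2 ^ i)), fI (s - Multiset.replicate j (2 ^ i)))
      ((2:ℤ)^i))]
    exact Finset.sum_comm
  rw [hswap, Finset.mul_sum, b_eq n, Finset.mul_sum,
    ← Finset.sum_add_distrib, ← Finset.sum_add_distrib]
  refine Finset.sum_congr rfl (fun s hs => ?_)
  obtain ⟨hsum, hpow⟩ := mem_BP.1 hs
  -- split off the i = 0, 1 terms
  rw [← Finset.sum_range_add_sum_Ico (fun i => (2:ℤ)^i *
        ∑ j ∈ Finset.Icc 1 (s.count (2 ^ i)), fI (s - Multiset.replicate j (2 ^ i)))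
      (show 2 ≤ n + 1 by omega),
    Finset.sum_range_succ, Finset.sum_range_one]
  have eIco : ∑ i ∈ Finset.Ico 2 (n+1), (2:ℤ)^i *
        ∑ j ∈ Finset.Icc 1 (s.count (2 ^ i)), fI (s - Multiset.replicate j (2 ^ i))
      = ∑ i ∈ Finset.Ico 2 (n+1), (2:ℤ)^i *
          ((s.count (2 ^ i) : ℤ) * ((s.count 1 : ℤ) * (s.count 2 : ℤ))) :=
    Finset.sum_congr rfl (fun i hi => by rw [innerBig s i (Finset.mem_Ico.1 hi).1])
  rw [eIco]
  have r0 : (2:ℕ)^0 = 1 := by norm_num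
  have r1 : (2:ℕ)^1 = 2 := by norm_num
  rw [r0, r1, inner0 s, inner1 s]
  -- the remaining sum over Ico factors
  have e2 : ∑ i ∈ Finset.Ico 2 (n+1), (2:ℤ)^i *
        ((s.count (2 ^ i) : ℤ) * ((s.count 1 : ℤ) * (s.count 2 : ℤ)))
      = (∑ i ∈ Finset.Ico 2 (n+1), (2:ℤ)^i * (s.count (2 ^ i) : ℤ)) *
          ((s.count 1 : ℤ) * (s.count 2 : ℤ)) := by
    rw [Finset.sum_mul]
    exact Finset.sum_congr rfl (fun i _ => (mul_assoc _ _ _).symm)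
  rw [e2]
  -- the sum of the parts
  have hc : (n : ℤ) = ∑ i ∈ Finset.range (n+1), (2:ℤ)^i * (s.count (2 ^ i) : ℤ) := by
    exact_mod_cast congrArg (fun m : ℕ => (m : ℤ)) (sum_counts hsum hpow)
  have hc2 : (n : ℤ) = (s.count 1 : ℤ) + 2 * (s.count 2 : ℤ) +
      ∑ i ∈ Finset.Ico 2 (n+1), (2:ℤ)^i * (s.count (2 ^ i) : ℤ) := by
    rw [hc, ← Finset.sum_range_add_sum_Ico (fun i => (2:ℤ)^i * (s.count (2 ^ i) : ℤ))
      (show 2 ≤ n + 1 by omega), Finset.sum_range_succ, Finset.sum_range_one, r0, r1]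
    ring
  unfold fI
  linear_combination ((s.count 1 : ℤ) * (s.count 2 : ℤ)) * hc2
    - (s.count 2 : ℤ) * two_Sg (s.count 1) - 2 * (s.count 1 : ℤ) * two_Sg (s.count 2)
end

section
/- For every integer d ≥ 2 and all n ≥ 0, a_n(d) = Σ_{i ≥ 1} (i-1)·|P(n-i, d)|, where the sum is over integers i with 1 ≤ i ≤ n. -/
open Classical in
/-- The finset of `d`-ary partitions of `n`: partitions all of whose parts are powers of `d`. -/
noncomputable def daryPartitions (d n : ℕ) : Finset (Nat.Partition n) :=
  Finset.univ.filter fun l => ∀ p ∈ l.parts, ∃ i : ℕ, p = d ^ i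

/-- `aD d n = m₁(ImP₂(n, d))`: the total number of parts equal to 1 in the image of `pre2`
on `d`-ary partitions of `n` with at least two parts; by injectivity this equals
`∑_{λ ∈ P(n,d)} C(m₁(λ), 2)`. -/
noncomputable def aD (d n : ℕ) : ℕ :=
  ∑ l ∈ daryPartitions d n, Nat.choose (l.parts.count 1) 2

open Classical

lemma mem_dary {d n : ℕ} {l : Nat.Partition n} :
    l ∈ daryPartitions d n ↔ ∀ p ∈ l.parts, ∃ i : ℕ, p = d ^ i := by
  simp [daryPartitions]

lemma count_one_le {n : ℕ} (l : Nat.Partition n) : l.parts.count 1 ≤ n := by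
  have h1 : l.parts.count 1 ≤ Multiset.card l.parts := Multiset.count_le_card _ _
  have h2 : Multiset.card l.parts • 1 ≤ l.parts.sum :=
    Multiset.card_nsmul_le_sum fun x hx => l.parts_pos hx
  have := l.parts_sum
  simp at h2
  omega

lemma delOnes_sum {n j : ℕ} (l : Nat.Partition n) (h : Multiset.replicate j 1 ≤ l.parts) :
    (l.parts - Multiset.replicate j 1).sum = n - j := by
  have h2 : (l.parts - Multiset.replicate j 1) + Multiset.replicate j 1 = l.parts :=
    tsub_add_cancel_of_le h
  have h3 := congrArg Multiset.sum h2
  rw [Multiset.sum_add, Multiset.sum_replicate, l.parts_sum] at h3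
  simp at h3
  omega

noncomputable def delOnes {n : ℕ} (j : ℕ) (l : Nat.Partition n)
    (h : Multiset.replicate j 1 ≤ l.parts) : Nat.Partition (n - j) where
  parts := l.parts - Multiset.replicate j 1
  parts_pos hi := l.parts_pos (Multiset.mem_of_le (Multiset.sub_le_self _ _) hi)
  parts_sum := delOnes_sum l h

noncomputable def addOnes {n : ℕ} (j : ℕ) (hjn : j ≤ n) (m : Nat.Partition (n - j)) :
    Nat.Partition n where
  parts := m.parts + Multiset.replicate j 1
  parts_pos hi := by
    rcases Multiset.mem_add.1 hi with h | h
    · exact m.parts_pos h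
    · simp [Multiset.eq_of_mem_replicate h]
  parts_sum := by
    rw [Multiset.sum_add, Multiset.sum_replicate, m.parts_sum]
    simp
    omega

lemma card_ge_ones {d n j : ℕ} (hjn : j ≤ n) :
    ((daryPartitions d n).filter fun l => j ≤ l.parts.count 1).card
      = (daryPartitions d (n - j)).card := by
  refine Finset.card_bij'
    (fun l hl => delOnes j l (Multiset.le_count_iff_replicate_le.1 (Finset.mem_filter.1 hl).2))
    (fun m _ => addOnes j hjn m) ?_ ?_ ?_ ?_
  · intro l hl
    rw [mem_dary]
    intro p hp
    exact (mem_dary.1 (Finset.mem_filter.1 hl).1) p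
      (Multiset.mem_of_le (Multiset.sub_le_self _ _) hp)
  · intro m hm
    rw [Finset.mem_filter]
    constructor
    · rw [mem_dary]
      intro p hp
      rcases Multiset.mem_add.1 hp with h | h
      · exact mem_dary.1 hm p h
      · exact ⟨0, by simp [Multiset.eq_of_mem_replicate h]⟩
    · show j ≤ Multiset.count 1 (m.parts + Multiset.replicate j 1)
      rw [Multiset.count_add, Multiset.count_replicate]
      simp
  · intro l hl
    ext1
    show (l.parts - Multiset.replicate j 1) + Multiset.replicate j 1 = l.parts
    exact tsub_add_cancel_of_le
      (Multiset.le_count_iff_replicate_le.1 (Finset.mem_filter.1 hl).2)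
  · intro m hm
    ext1
    show (m.parts + Multiset.replicate j 1) - Multiset.replicate j 1 = m.parts
    exact add_tsub_cancel_right _ _

lemma choose_two_eq (m : ℕ) : m.choose 2 = ∑ i ∈ Finset.Icc 1 m, (i - 1) := by
  induction m with
  | zero => simp
  | succ k ih =>
    rw [Finset.sum_Icc_succ_top (by omega), ← ih, Nat.choose_succ_succ]
    simp [Nat.choose_one_right]
    omega

lemma choose_two_eq' (m n : ℕ) (hm : m ≤ n) :
    m.choose 2 = ∑ i ∈ Finset.Icc 1 n, (i - 1) * (if i ≤ m then 1 else 0) := by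
  rw [choose_two_eq]
  rw [← Finset.sum_subset (Finset.Icc_subset_Icc_right hm)
    (fun i hi hni => by simp only [Finset.mem_Icc] at hi hni; rw [if_neg (show ¬ i ≤ m by omega), mul_zero])]
  apply Finset.sum_congr rfl
  intro i hi
  simp only [Finset.mem_Icc] at hi
  simp [hi.2]

theorem stmt_15 (d : ℕ) (hd : 2 ≤ d) (n : ℕ) :
    aD d n = ∑ i ∈ Finset.Icc 1 n, (i - 1) * (daryPartitions d (n - i)).card := by
  unfold aD
  have h1 : ∀ l ∈ daryPartitions d n, (l.parts.count 1).choose 2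
      = ∑ i ∈ Finset.Icc 1 n, (i - 1) * (if i ≤ l.parts.count 1 then 1 else 0) :=
    fun l _ => choose_two_eq' _ n (count_one_le l)
  rw [Finset.sum_congr rfl h1, Finset.sum_comm]
  apply Finset.sum_congr rfl
  intro i hi
  simp only [Finset.mem_Icc] at hi
  rw [← Finset.mul_sum, ← card_ge_ones hi.2, Finset.card_filter]
end
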